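/- arXiv:2102.06385 — 6 statements merged into one kernel-verified Lean document; each statement's English description precedes it below -/
import Mathlib

section
/- Suppose the primal BwK LP has a unique optimal solution x*. For each resource j ∈ [d], let OPT_j be the optimal value of the penalized LP max μᵀx − (Tb − C_{j,·}x) s.t. Cx ≤ B, x ≥ 0, where C_{j,·} is the j-th row of C. Then OPT_j ≤ OPT_LP for all j; OPT_j = OPT_LP if and only if constraint j is binding at x* (i.e. (Cx*)_j = Tb); and OPT_j < OPT_LP if and only if (Cx*)_j < Tb. -/
open Matrix Finset

/-- If the primal BwK LP has a unique optimal solution `x*`, then for every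
resource `j`, the value `OPTⱼ` of the penalized LP
`max μᵀx − (Tb − C_{j,·} x)  s.t. Cx ≤ B, x ≥ 0` satisfies `OPTⱼ ≤ OPT_LP`,
`OPTⱼ = OPT_LP ↔ (Cx*)ⱼ = Tb`, and `OPTⱼ < OPT_LP ↔ (Cx*)ⱼ < Tb`. -/
theorem stmt4 (m d : ℕ) (hm : 0 < m) (hd : 0 < d)
    (μ : Fin m → ℝ) (C : Matrix (Fin d) (Fin m) ℝ)
    (b T : ℝ) (hb : 0 < b) (hb1 : b ≤ 1) (hT : 0 < T)
    (hμ : ∀ i, μ i ∈ Set.Icc (0 : ℝ) 1)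
    (hC : ∀ j i, C j i ∈ Set.Icc (0 : ℝ) 1)
    (hrow : ∀ i, C ⟨0, hd⟩ i = b)
    (B : Fin d → ℝ) (hB : B = fun _ => T * b)
    (OPTLP : ℝ) (xstar : Fin m → ℝ)
    -- x* is optimal for the primal LP with value OPT_LP
    (hxfeas : (∀ i, 0 ≤ xstar i) ∧ (∀ j, C.mulVec xstar j ≤ B j))
    (hxval : μ ⬝ᵥ xstar = OPTLP)
    (hOPT : IsGreatest {r : ℝ | ∃ x : Fin m → ℝ,
      (∀ i, 0 ≤ x i) ∧ (∀ j, C.mulVec x j ≤ B j) ∧ r = μ ⬝ᵥ x} OPTLP)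
    -- x* is the unique optimal solution
    (huniq : ∀ x' : Fin m → ℝ, (∀ i, 0 ≤ x' i) → (∀ j, C.mulVec x' j ≤ B j) →
      μ ⬝ᵥ x' = OPTLP → x' = xstar) :
    ∀ j : Fin d, ∀ OPTj : ℝ,
      IsGreatest {r : ℝ | ∃ x : Fin m → ℝ,
        (∀ i, 0 ≤ x i) ∧ (∀ j', C.mulVec x j' ≤ B j') ∧
        r = μ ⬝ᵥ x - (T * b - C.mulVec x j)} OPTj →
      (OPTj ≤ OPTLP ∧ (OPTj = OPTLP ↔ C.mulVec xstar j = T * b) ∧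
        (OPTj < OPTLP ↔ C.mulVec xstar j < T * b)) := by
  intro j OPTj hOPTj
  obtain ⟨⟨x0, hx0pos, hx0feas, hx0val⟩, hub⟩ := hOPTj
  have h1 : μ ⬝ᵥ x0 ≤ OPTLP := hOPT.2 ⟨x0, hx0pos, hx0feas, rfl⟩
  have h2 : C.mulVec x0 j ≤ T * b := by simpa [hB] using hx0feas j
  have hxs : C.mulVec xstar j ≤ T * b := by simpa [hB] using hxfeas.2 j
  have hle : OPTj ≤ OPTLP := by linarith
  have hiff : OPTj = OPTLP ↔ C.mulVec xstar j = T * b := by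
    constructor
    · intro he
      have hμx0 : μ ⬝ᵥ x0 = OPTLP := by linarith
      have hx0eq := huniq x0 hx0pos hx0feas hμx0
      have hce : C.mulVec x0 j = T * b := by linarith
      rwa [hx0eq] at hce
    · intro he
      have hmem : OPTLP ∈ {r : ℝ | ∃ x : Fin m → ℝ,
          (∀ i, 0 ≤ x i) ∧ (∀ j', C.mulVec x j' ≤ B j') ∧
          r = μ ⬝ᵥ x - (T * b - C.mulVec x j)} :=
        ⟨xstar, hxfeas.1, hxfeas.2, by rw [hxval, he]; ring⟩
      have := hub hmem
      linarith
  refine ⟨hle, hiff, ?_⟩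
  constructor
  · intro hlt
    rcases lt_or_eq_of_le hxs with h | h
    · exact h
    · exact absurd (hiff.mpr h) (ne_of_lt hlt)
  · intro hlt
    rcases lt_or_eq_of_le hle with h | h
    · exact h
    · exact absurd (hiff.mp h) (ne_of_lt hlt)
end

section
/- Let ε ≥ 0, b ∈ (0,1], T > 0, B = Tb·𝟙 ∈ ℝ^d. Suppose μ, μ^U ∈ ℝ^m satisfy μ ≤ μ^U ≤ μ + ε·𝟙 entrywise with μ ∈ [0,1]^m, and C, C^L ∈ ℝ^{d×m} satisfy 0 ≤ C^L ≤ C ≤ C^L + ε·𝟙𝟙ᵀ entrywise, with the first rows of both C and C^L equal to b·𝟙ᵀ. For an arm i ∈ [m], let OPT_i be the optimal value of max μᵀx s.t. Cx ≤ B, x_i = 0, x ≥ 0, and let OPT_i^U be the optimal value of max (μ^U)ᵀx s.t. C^L x ≤ B, x_i = 0, x ≥ 0. Then OPT_i ≤ OPT_i^U ≤ OPT_i + (1 + 1/b)·εT. -/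
open Matrix Finset

/-- If `μ ≤ μ^U ≤ μ + ε𝟙` and `0 ≤ C^L ≤ C ≤ C^L + ε𝟙𝟙ᵀ` with the first rows
of `C` and `C^L` equal to `b𝟙ᵀ`, then for any arm `i` the UCB value `OPTᵢ^U` of
`max (μ^U)ᵀx s.t. C^L x ≤ B, xᵢ = 0, x ≥ 0` satisfies
`OPTᵢ ≤ OPTᵢ^U ≤ OPTᵢ + (1 + 1/b)·εT`. -/
theorem stmt7 (m d : ℕ) (hm : 0 < m) (hd : 0 < d)
    (μ μU : Fin m → ℝ) (C CL : Matrix (Fin d) (Fin m) ℝ)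
    (ε b T : ℝ) (hε : 0 ≤ ε) (hb : 0 < b) (hb1 : b ≤ 1) (hT : 0 < T)
    (B : Fin d → ℝ) (hB : B = fun _ => T * b)
    (hμ : ∀ i, μ i ∈ Set.Icc (0 : ℝ) 1)
    (hμU : ∀ i, μ i ≤ μU i ∧ μU i ≤ μ i + ε)
    (hCL0 : ∀ j i, 0 ≤ CL j i)
    (hCLC : ∀ j i, CL j i ≤ C j i ∧ C j i ≤ CL j i + ε)
    (hrow : ∀ i, C ⟨0, hd⟩ i = b) (hrowL : ∀ i, CL ⟨0, hd⟩ i = b)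
    (i : Fin m) (OPTi OPTiU : ℝ)
    (hOPTi : IsGreatest {r : ℝ | ∃ x : Fin m → ℝ,
      (∀ i', 0 ≤ x i') ∧ (∀ j, C.mulVec x j ≤ B j) ∧ x i = 0 ∧ r = μ ⬝ᵥ x} OPTi)
    (hOPTiU : IsGreatest {r : ℝ | ∃ x : Fin m → ℝ,
      (∀ i', 0 ≤ x i') ∧ (∀ j, CL.mulVec x j ≤ B j) ∧ x i = 0 ∧ r = μU ⬝ᵥ x} OPTiU) :
    OPTi ≤ OPTiU ∧ OPTiU ≤ OPTi + (1 + 1 / b) * ε * T := by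
  have hmv : ∀ (M : Matrix (Fin d) (Fin m) ℝ) (y : Fin m → ℝ) (j : Fin d),
      M.mulVec y j = ∑ k, M j k * y k := fun M y j => rfl
  have hdp : ∀ (v y : Fin m → ℝ), v ⬝ᵥ y = ∑ k, v k * y k := fun v y => rfl
  obtain ⟨x₀, hx₀0, hx₀C, hx₀i, hx₀r⟩ := hOPTi.1
  obtain ⟨x, hx0, hxC, hxi, hxr⟩ := hOPTiU.1
  subst hB
  -- sums bounded by T
  have hsum : ∀ (y : Fin m → ℝ), (∀ i', 0 ≤ y i') →
      (∀ j, CL.mulVec y j ≤ T * b) → ∑ i', y i' ≤ T := by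
    intro y hy hCy
    have h0 := hCy ⟨0, hd⟩
    rw [hmv, Finset.sum_congr rfl (fun k _ => by rw [hrowL k]), ← Finset.mul_sum] at h0
    nlinarith [h0]
  have hsx : ∑ i', x i' ≤ T := hsum x hx0 hxC
  have hsx₀ : ∑ i', x₀ i' ≤ T := by
    refine hsum x₀ hx₀0 (fun j => le_trans ?_ (hx₀C j))
    rw [hmv, hmv]
    exact Finset.sum_le_sum fun k _ => mul_le_mul_of_nonneg_right (hCLC j k).1 (hx₀0 k)
  -- first inequality
  have h1 : OPTi ≤ OPTiU := by
    have hle : μ ⬝ᵥ x₀ ≤ μU ⬝ᵥ x₀ := by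
      rw [hdp, hdp]
      exact Finset.sum_le_sum fun k _ => mul_le_mul_of_nonneg_right (hμU k).1 (hx₀0 k)
    have h2 : μU ⬝ᵥ x₀ ≤ OPTiU := by
      refine hOPTiU.2 ⟨x₀, hx₀0, fun j => le_trans ?_ (hx₀C j), hx₀i, rfl⟩
      rw [hmv, hmv]
      exact Finset.sum_le_sum fun k _ => mul_le_mul_of_nonneg_right (hCLC j k).1 (hx₀0 k)
    rw [hx₀r]; linarith
  refine ⟨h1, ?_⟩
  -- OPTi ≤ T
  have hOPTiT : OPTi ≤ T := by
    have : μ ⬝ᵥ x₀ ≤ ∑ i', x₀ i' := by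
      rw [hdp]
      refine Finset.sum_le_sum fun k _ => ?_
      nlinarith [(hμ k).1, (hμ k).2, hx₀0 k]
    rw [hx₀r]; linarith
  -- scaled point
  set D : ℝ := 1 + ε / b with hD
  have hDpos : 0 < D := by positivity
  have hfeas : ∀ j, C.mulVec (fun k => x k / D) j ≤ T * b := by
    intro j
    have hC : C.mulVec x j ≤ CL.mulVec x j + ε * ∑ i', x i' := by
      have h1' : C.mulVec x j ≤ ∑ k, (CL j k + ε) * x k := by
        rw [hmv]
        exact Finset.sum_le_sum fun k _ => mul_le_mul_of_nonneg_right (hCLC j k).2 (hx0 k)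
      calc C.mulVec x j ≤ ∑ k, (CL j k + ε) * x k := h1'
        _ = CL.mulVec x j + ε * ∑ i', x i' := by
            rw [hmv, Finset.mul_sum, ← Finset.sum_add_distrib]
            exact Finset.sum_congr rfl fun k _ => by ring
    have hεs : ε * ∑ i', x i' ≤ ε * T := mul_le_mul_of_nonneg_left hsx hε
    have hCx : C.mulVec x j ≤ T * b * D := by
      have heq : T * b + ε * T = T * b * D := by field_simp [hD]; rw [hD]; field_simp
      have := hxC j
      simp only at this
      linarith
    have heq : C.mulVec (fun k => x k / D) j = (C.mulVec x j) / D := by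
      rw [hmv, hmv, Finset.sum_div]
      exact Finset.sum_congr rfl fun k _ => by ring
    rw [heq, div_le_iff₀ hDpos]
    linarith
  have hmem : μ ⬝ᵥ (fun k => x k / D) ≤ OPTi := by
    refine hOPTi.2 ⟨fun k => x k / D, fun k => div_nonneg (hx0 k) hDpos.le, hfeas,
      by simp [hxi], rfl⟩
  have hval : μ ⬝ᵥ (fun k => x k / D) = (μ ⬝ᵥ x) / D := by
    rw [hdp, hdp, Finset.sum_div]
    exact Finset.sum_congr rfl fun k _ => by ring
  rw [hval, div_le_iff₀ hDpos] at hmem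
  have hμUx : μU ⬝ᵥ x ≤ μ ⬝ᵥ x + ε * T := by
    have h1' : μU ⬝ᵥ x ≤ ∑ k, (μ k + ε) * x k := by
      rw [hdp]
      exact Finset.sum_le_sum fun k _ => mul_le_mul_of_nonneg_right (hμU k).2 (hx0 k)
    have heq : ∑ k, (μ k + ε) * x k = μ ⬝ᵥ x + ε * ∑ i', x i' := by
      rw [hdp, Finset.mul_sum, ← Finset.sum_add_distrib]
      exact Finset.sum_congr rfl fun k _ => by ring
    nlinarith [mul_le_mul_of_nonneg_left hsx hε]
  have hεb : ε / b * OPTi ≤ ε / b * T :=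
    mul_le_mul_of_nonneg_left hOPTiT (by positivity)
  have hfin : OPTiU ≤ OPTi * D + ε * T := by
    rw [hxr]; linarith
  rw [hD] at hfin
  have hgoal : OPTi * (1 + ε / b) + ε * T ≤ OPTi + (1 + 1 / b) * ε * T := by
    have h2 : (1 + 1 / b) * ε * T = ε * T + ε / b * T := by field_simp
    nlinarith
  linarith
end

section
/- Let ε ≥ 0, b ∈ (0,1], T > 0, B = Tb·𝟙 ∈ ℝ^d. Suppose μ, μ^U ∈ ℝ^m satisfy μ ≤ μ^U ≤ μ + ε·𝟙 with μ ∈ [0,1]^m; C, C^L ∈ ℝ^{d×m} satisfy 0 ≤ C^L ≤ C ≤ C^L + ε·𝟙𝟙ᵀ entrywise with the first rows of C and C^L both equal to b·𝟙ᵀ; and a row estimate C^U_{j,·} satisfies C_{j,·} ≤ C^U_{j,·} ≤ C_{j,·} + ε·𝟙ᵀ. Let OPT_j be the optimal value of min Bᵀy − Tb s.t. Cᵀy ≥ μ + (C_{j,·})ᵀ, y ≥ 0, and let OPT_j^U be the optimal value of min Bᵀy − Tb s.t. (C^L)ᵀy ≥ μ^U + (C^U_{j,·})ᵀ, y ≥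 0. Then OPT_j ≤ OPT_j^U ≤ OPT_j + 3·(2 + 1/b)·εT. -/
open Matrix Finset

/-- With `μ ≤ μ^U ≤ μ + ε𝟙`, `0 ≤ C^L ≤ C ≤ C^L + ε𝟙𝟙ᵀ` (first rows of `C`,
`C^L` equal to `b𝟙ᵀ`) and a row estimate `C_{j,·} ≤ C^U_{j,·} ≤ C_{j,·} + ε𝟙ᵀ`, the UCB value
`OPTⱼ^U` of `min Bᵀy − Tb s.t. (C^L)ᵀy ≥ μ^U + (C^U_{j,·})ᵀ, y ≥ 0` satisfies
`OPTⱼ ≤ OPTⱼ^U ≤ OPTⱼ + 3(2 + 1/b)·εT`. -/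
theorem stmt8 (m d : ℕ) (hm : 0 < m) (hd : 0 < d)
    (μ μU : Fin m → ℝ) (C CL : Matrix (Fin d) (Fin m) ℝ)
    (ε b T : ℝ) (hε : 0 ≤ ε) (hb : 0 < b) (hb1 : b ≤ 1) (hT : 0 < T)
    (B : Fin d → ℝ) (hB : B = fun _ => T * b)
    (hμ : ∀ i, μ i ∈ Set.Icc (0 : ℝ) 1)
    (hμU : ∀ i, μ i ≤ μU i ∧ μU i ≤ μ i + ε)
    (hCL0 : ∀ j i, 0 ≤ CL j i)
    (hCLC : ∀ j i, CL j i ≤ C j i ∧ C j i ≤ CL j i + ε)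
    (hrow : ∀ i, C ⟨0, hd⟩ i = b) (hrowL : ∀ i, CL ⟨0, hd⟩ i = b)
    (j : Fin d) (CUrow : Fin m → ℝ)
    (hCUrow : ∀ i, C j i ≤ CUrow i ∧ CUrow i ≤ C j i + ε)
    (OPTj OPTjU : ℝ)
    (hOPTj : IsLeast {r : ℝ | ∃ y : Fin d → ℝ,
      (∀ j', 0 ≤ y j') ∧ (∀ i, μ i + C j i ≤ Cᵀ.mulVec y i) ∧
      r = B ⬝ᵥ y - T * b} OPTj)
    (hOPTjU : IsLeast {r : ℝ | ∃ y : Fin d → ℝ,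
      (∀ j', 0 ≤ y j') ∧ (∀ i, μU i + CUrow i ≤ CLᵀ.mulVec y i) ∧
      r = B ⬝ᵥ y - T * b} OPTjU) :
    OPTj ≤ OPTjU ∧ OPTjU ≤ OPTj + 3 * (2 + 1 / b) * ε * T := by
  subst hB
  have hbne : b ≠ 0 := ne_of_gt hb
  obtain ⟨⟨yU, hyUpos, hyUfeas, hyUval⟩, hlbU⟩ := hOPTjU
  obtain ⟨⟨ys, hyspos, hysfeas, hysval⟩, hlb⟩ := hOPTj
  set j0 : Fin d := ⟨0, hd⟩ with hj0
  constructor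
  · -- OPTj ≤ OPTjU
    apply hlb
    refine ⟨yU, hyUpos, fun i => ?_, hyUval⟩
    have h1 : μ i + C j i ≤ μU i + CUrow i :=
      add_le_add (hμU i).1 (hCUrow i).1
    have h2 : CLᵀ.mulVec yU i ≤ Cᵀ.mulVec yU i := by
      simp only [Matrix.mulVec, Matrix.transpose_apply, dotProduct]
      exact Finset.sum_le_sum fun j' _ =>
        mul_le_mul_of_nonneg_right (hCLC j' i).1 (hyUpos j')
    linarith [hyUfeas i]
  · -- OPTjU ≤ OPTj + 3(2+1/b)εT
    -- first: OPTj ≤ T using y1 = (1/b) e_{j0} + e_j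
    have hOT : OPTj ≤ T := by
      apply hlb
      refine ⟨fun j' => (if j' = j0 then 1/b else 0) + (if j' = j then 1 else 0),
        fun j' => by positivity, fun i => ?_, ?_⟩
      · simp only [Matrix.mulVec, Matrix.transpose_apply, dotProduct, mul_add,
          Finset.sum_add_distrib, mul_ite, mul_one, mul_zero, Finset.sum_ite_eq',
          Finset.mem_univ, if_true]
        rw [hrow i]
        have := (hμ i).2
        have hCj : 0 ≤ C j i := le_trans (hCL0 j i) (hCLC j i).1
        have : b * (1/b) = 1 := mul_one_div_cancel hbne
        nlinarith [(hμ i).2]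
      · simp only [dotProduct, mul_add, Finset.sum_add_distrib, mul_ite, mul_one,
          mul_zero, Finset.sum_ite_eq', Finset.mem_univ, if_true]
        field_simp
        ring
    set S : ℝ := ∑ j', ys j' with hS
    have hS0 : 0 ≤ S := Finset.sum_nonneg fun j' _ => hyspos j'
    have hval : OPTj = T * b * S - T * b := by
      rw [hysval, hS]; simp [dotProduct, Finset.mul_sum]
    have hSle : S ≤ 1 + 1/b := by
      have hTb : 0 < T * b := mul_pos hT hb
      have h1 : b * (1/b) = 1 := mul_one_div_cancel hbne
      rw [hval] at hOT
      nlinarith [hTb, h1]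
    set t : ℝ := (ε * S + 2 * ε) / b with ht
    have ht0 : 0 ≤ t := by positivity
    have hkey : OPTjU ≤ OPTj + T * (ε * S + 2 * ε) := by
      apply hlbU
      refine ⟨fun j' => ys j' + (if j' = j0 then t else 0),
        fun j' => by have := hyspos j'; positivity, fun i => ?_, ?_⟩
      · simp only [Matrix.mulVec, Matrix.transpose_apply, dotProduct, mul_add,
          Finset.sum_add_distrib, mul_ite, mul_zero, Finset.sum_ite_eq',
          Finset.mem_univ, if_true]
        rw [hrowL i]
        have hbt : b * t = ε * S + 2 * ε := by
          rw [ht]; field_simp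
        have h3 : ∑ j', C j' i * ys j' - ε * S ≤ ∑ j', CL j' i * ys j' := by
          have : ∑ j', (C j' i - ε) * ys j' ≤ ∑ j', CL j' i * ys j' :=
            Finset.sum_le_sum fun j' _ => mul_le_mul_of_nonneg_right
              (by linarith [(hCLC j' i).2]) (hyspos j')
          have heq : ∑ j', (C j' i - ε) * ys j' = ∑ j', C j' i * ys j' - ε * S := by
            rw [hS, Finset.mul_sum, ← Finset.sum_sub_distrib]
            exact Finset.sum_congr rfl fun j' _ => by ring
          linarith [heq ▸ this]
        have h4 : μ i + C j i ≤ ∑ j', C j' i * ys j' := by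
          have := hysfeas i
          simpa [Matrix.mulVec, Matrix.transpose_apply, dotProduct] using this
        have h5 : μU i + CUrow i ≤ μ i + C j i + 2 * ε := by
          linarith [(hμU i).2, (hCUrow i).2]
        linarith
      · simp only [dotProduct, mul_add, Finset.sum_add_distrib, mul_ite,
          mul_zero, Finset.sum_ite_eq', Finset.mem_univ, if_true]
        have h6 : ∑ j', T * b * ys j' = T * b * S := by
          rw [hS, Finset.mul_sum]
        have hbt : b * t = ε * S + 2 * ε := by rw [ht]; field_simp
        rw [h6, hval]; nlinarith
    have hfinal : T * (ε * S + 2 * ε) ≤ 3 * (2 + 1 / b) * ε * T := by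
      have hbinv : 0 < 1/b := by positivity
      have h7 : S + 2 ≤ 3 + 1/b := by linarith
      have h8 : 0 ≤ ε * T := mul_nonneg hε hT.le
      nlinarith [mul_le_mul_of_nonneg_left h7 h8, mul_nonneg h8 hbinv.le]
    linarith
end

section
/- Let 0 ≤ ε ≤ b with b ∈ (0,1], T > 0, B = Tb·𝟙 ∈ ℝ^d. Suppose μ, μ^L ∈ ℝ^m satisfy μ − ε·𝟙 ≤ μ^L ≤ μ with μ ∈ [0,1]^m, and C, C^U ∈ ℝ^{d×m} satisfy C ≤ C^U ≤ C + ε·𝟙𝟙ᵀ entrywise, where the first row of C equals b·𝟙ᵀ. Let OPT_LP be the optimal value of max μᵀx s.t. Cx ≤ B, x ≥ 0, and OPT^L the optimal value of max (μ^L)ᵀx s.t. C^U x ≤ B, x ≥ 0. Then OPT_LP − (1 + 1/b)·εT ≤ OPT^L ≤ OPT_LP. -/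
open Matrix Finset

/-- If `μ − ε𝟙 ≤ μ^L ≤ μ` and `C ≤ C^U ≤ C + ε𝟙𝟙ᵀ` with `0 ≤ ε ≤ b` and the
first row of `C` equal to `b𝟙ᵀ`, then the LCB value `OPT^L` of
`max (μ^L)ᵀx s.t. C^U x ≤ B, x ≥ 0` satisfies
`OPT_LP − (1 + 1/b)·εT ≤ OPT^L ≤ OPT_LP`. -/
theorem stmt9 (m d : ℕ) (hm : 0 < m) (hd : 0 < d)
    (μ μL : Fin m → ℝ) (C CU : Matrix (Fin d) (Fin m) ℝ)
    (ε b T : ℝ) (hε0 : 0 ≤ ε) (hεb : ε ≤ b) (hb : 0 < b) (hb1 : b ≤ 1) (hT : 0 < T)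
    (B : Fin d → ℝ) (hB : B = fun _ => T * b)
    (hμ : ∀ i, μ i ∈ Set.Icc (0 : ℝ) 1)
    (hμL : ∀ i, μ i - ε ≤ μL i ∧ μL i ≤ μ i)
    (hCU : ∀ j i, C j i ≤ CU j i ∧ CU j i ≤ C j i + ε)
    (hrow : ∀ i, C ⟨0, hd⟩ i = b)
    (OPTLP OPTL : ℝ)
    (hOPTLP : IsGreatest {r : ℝ | ∃ x : Fin m → ℝ,
      (∀ i, 0 ≤ x i) ∧ (∀ j, C.mulVec x j ≤ B j) ∧ r = μ ⬝ᵥ x} OPTLP)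
    (hOPTL : IsGreatest {r : ℝ | ∃ x : Fin m → ℝ,
      (∀ i, 0 ≤ x i) ∧ (∀ j, CU.mulVec x j ≤ B j) ∧ r = μL ⬝ᵥ x} OPTL) :
    OPTLP - (1 + 1 / b) * ε * T ≤ OPTL ∧ OPTL ≤ OPTLP := by
  obtain ⟨⟨x, hx0, hxf, hxr⟩, hub⟩ := hOPTLP
  obtain ⟨⟨y, hy0, hyf, hyr⟩, hubL⟩ := hOPTL
  subst hB
  -- the function x is bounded in l1 norm by T (row 0 constraint)
  have hsumx : ∑ i, x i ≤ T := by
    have heq : C.mulVec x ⟨0, hd⟩ = b * ∑ i, x i := by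
      simp [Matrix.mulVec, dotProduct, hrow, Finset.mul_sum]
    have h0 : b * ∑ i, x i ≤ T * b := heq ▸ hxf ⟨0, hd⟩
    nlinarith [h0]
  -- Upper bound: OPTL ≤ OPTLP
  have hupper : OPTL ≤ OPTLP := by
    have hCy : ∀ j, C.mulVec y j ≤ T * b := by
      intro j
      have h1 : C.mulVec y j ≤ CU.mulVec y j := by
        simp only [Matrix.mulVec, dotProduct]
        apply Finset.sum_le_sum; intro i _
        exact mul_le_mul_of_nonneg_right (hCU j i).1 (hy0 i)
      exact le_trans h1 (hyf j)
    have hmem : μ ⬝ᵥ y ≤ OPTLP := hub ⟨y, hy0, hCy, rfl⟩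
    have hle : μL ⬝ᵥ y ≤ μ ⬝ᵥ y := by
      simp only [dotProduct]
      apply Finset.sum_le_sum; intro i _
      exact mul_le_mul_of_nonneg_right (hμL i).2 (hy0 i)
    rw [hyr]; linarith
  refine ⟨?_, hupper⟩
  -- OPTLP ≤ T since μ ≤ 1
  have hOT : OPTLP ≤ T := by
    rw [hxr]
    have : μ ⬝ᵥ x ≤ ∑ i, x i := by
      simp only [dotProduct]
      calc ∑ i, μ i * x i ≤ ∑ i, 1 * x i := by
            apply Finset.sum_le_sum; intro i _
            exact mul_le_mul_of_nonneg_right (hμ i).2 (hx0 i)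
        _ = ∑ i, x i := by simp
    linarith
  have hOLT : OPTL ≤ T := le_trans hupper hOT
  -- Lower bound: scale x by s = b/(b+ε)
  set s : ℝ := b / (b + ε) with hs
  have hbε : 0 < b + ε := by linarith
  have hs0 : 0 ≤ s := by positivity
  have hsb : s * (b + ε) = b := by rw [hs]; field_simp
  have hsumx0 : 0 ≤ ∑ i, x i := Finset.sum_nonneg fun i _ => hx0 i
  have hfeas : ∀ j, CU.mulVec (fun i => s * x i) j ≤ T * b := by
    intro j
    have h1 : CU.mulVec (fun i => s * x i) j = s * ∑ i, CU j i * x i := by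
      show ∑ i, CU j i * (s * x i) = s * ∑ i, CU j i * x i
      rw [Finset.mul_sum]
      exact Finset.sum_congr rfl fun i _ => by ring
    have h2 : ∑ i, CU j i * x i ≤ ∑ i, C j i * x i + ε * ∑ i, x i := by
      rw [Finset.mul_sum, ← Finset.sum_add_distrib]
      apply Finset.sum_le_sum; intro i _
      nlinarith [(hCU j i).2, hx0 i]
    have h3 : ∑ i, C j i * x i ≤ T * b := by
      have := hxf j
      simpa [Matrix.mulVec, dotProduct] using this
    have h4 : ∑ i, CU j i * x i ≤ T * b + ε * T := by nlinarith
    have h5 : s * (T * b + ε * T) ≤ T * b := by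
      rw [hs, div_mul_eq_mul_div, div_le_iff₀ hbε]
      nlinarith
    calc CU.mulVec (fun i => s * x i) j = s * ∑ i, CU j i * x i := h1
      _ ≤ s * (T * b + ε * T) := mul_le_mul_of_nonneg_left h4 hs0
      _ ≤ T * b := h5
  have hval : s * (μ ⬝ᵥ x) - s * ε * (∑ i, x i) ≤ μL ⬝ᵥ (fun i => s * x i) := by
    simp only [dotProduct]
    have hsum : ∑ i, (s * (μ i * x i) - s * ε * x i) ≤ ∑ i, μL i * (s * x i) := by
      apply Finset.sum_le_sum; intro i _
      have h := (hμL i).1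
      nlinarith [mul_le_mul_of_nonneg_left h (mul_nonneg hs0 (hx0 i))]
    calc s * (∑ i, μ i * x i) - s * ε * (∑ i, x i)
        = ∑ i, (s * (μ i * x i) - s * ε * x i) := by
          rw [Finset.sum_sub_distrib, Finset.mul_sum, Finset.mul_sum]
      _ ≤ _ := hsum
  have hmem2 : μL ⬝ᵥ (fun i => s * x i) ≤ OPTL :=
    hubL ⟨_, fun i => mul_nonneg hs0 (hx0 i), hfeas, rfl⟩
  -- key inequality: b * OPTLP - b * ε * T ≤ (b + ε) * OPTL
  have key : b * OPTLP - b * ε * T ≤ (b + ε) * OPTL := by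
    have h6 : s * (μ ⬝ᵥ x) - s * ε * T ≤ OPTL := by
      have : s * ε * (∑ i, x i) ≤ s * ε * T :=
        mul_le_mul_of_nonneg_left hsumx (mul_nonneg hs0 hε0)
      nlinarith [hval, hmem2]
    have h7 : (b + ε) * (s * (μ ⬝ᵥ x) - s * ε * T) ≤ (b + ε) * OPTL :=
      mul_le_mul_of_nonneg_left h6 (le_of_lt hbε)
    have h8 : (b + ε) * (s * (μ ⬝ᵥ x) - s * ε * T) = b * (μ ⬝ᵥ x) - b * ε * T := by
      have : (b + ε) * s = b := by rw [mul_comm]; exact hsb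
      calc (b + ε) * (s * (μ ⬝ᵥ x) - s * ε * T)
          = ((b + ε) * s) * (μ ⬝ᵥ x) - ((b + ε) * s) * ε * T := by ring
        _ = b * (μ ⬝ᵥ x) - b * ε * T := by rw [this]
    rw [hxr]
    linarith [h7, h8.symm.le, h8.le]
  have hfin : b * (OPTLP - (1 + 1 / b) * ε * T) ≤ b * OPTL := by
    have hb' : b ≠ 0 := ne_of_gt hb
    field_simp
    nlinarith [key, hOLT]
  exact le_of_mul_le_mul_left hfin hb
end

section
/- Let C ∈ ℝ^{m×m} be an invertible matrix, μ ∈ ℝ^m, and B ∈ ℝ^m, and suppose the feasible region P = {x ∈ ℝ^m : Cx ≤ B, x ≥ 0} is nonempty and bounded. Let OPT = max_{x ∈ P} μᵀx, and for each i ∈ [m] let OPT_i = max{μᵀx : x ∈ P, x_i = 0}. If OPT_i < OPT for every i ∈ [m], then C⁻¹B ≥ 0 (entrywise), C⁻¹B ∈ P, and μᵀ(C⁻¹B) = OPT; i.e., the unique solution of Cx = B is nonnegative and optimal. -/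
open Matrix Finset

private lemma contMulVecCoord {m : ℕ} (C : Matrix (Fin m) (Fin m) ℝ) (j : Fin m) :
    Continuous fun x : Fin m → ℝ => C.mulVec x j := by
  simpa [mulVec, dotProduct] using
    continuous_finset_sum Finset.univ fun i _ => (continuous_const.mul (continuous_apply i))

private lemma contDot {m : ℕ} (μ : Fin m → ℝ) :
    Continuous fun x : Fin m → ℝ => μ ⬝ᵥ x := by
  simpa [dotProduct] using
    continuous_finset_sum Finset.univ fun i _ => (continuous_const.mul (continuous_apply i))

/-- Let `C` be an invertible `m×m` matrix and suppose the polytope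
`P = {x : Cx ≤ B, x ≥ 0}` is nonempty and bounded. Let `OPT = max_{x ∈ P} μᵀx` and, for
each `i`, `OPTᵢ = max{μᵀx : x ∈ P, xᵢ = 0}`. If `OPTᵢ < OPT` for every `i`, then `C⁻¹B ≥ 0`,
`C⁻¹B ∈ P`, and `μᵀ(C⁻¹B) = OPT`. -/
theorem stmt13 (m : ℕ) (hm : 0 < m)
    (C : Matrix (Fin m) (Fin m) ℝ) (hinv : IsUnit C.det)
    (μ B : Fin m → ℝ)
    (Pset : Set (Fin m → ℝ))
    (hPset : Pset = {x : Fin m → ℝ | (∀ j, C.mulVec x j ≤ B j) ∧ ∀ i, 0 ≤ x i})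
    (hne : Pset.Nonempty) (hbdd : Bornology.IsBounded Pset)
    (OPT : ℝ)
    (hOPT : IsGreatest {r : ℝ | ∃ x ∈ Pset, r = μ ⬝ᵥ x} OPT)
    (hOPTi : ∀ i : Fin m, ∀ vi : ℝ,
      IsGreatest {r : ℝ | ∃ x ∈ Pset, x i = 0 ∧ r = μ ⬝ᵥ x} vi → vi < OPT) :
    (∀ j, 0 ≤ C⁻¹.mulVec B j) ∧ C⁻¹.mulVec B ∈ Pset ∧ μ ⬝ᵥ C⁻¹.mulVec B = OPT := by
  have hfinne : (Finset.univ : Finset (Fin m)).Nonempty := by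
    haveI : NeZero m := ⟨hm.ne'⟩
    exact Finset.univ_nonempty
  -- Pset is closed
  have hclosedP : IsClosed Pset := by
    rw [hPset]
    have : {x : Fin m → ℝ | (∀ j, C.mulVec x j ≤ B j) ∧ ∀ i, 0 ≤ x i}
        = (⋂ j, {x : Fin m → ℝ | C.mulVec x j ≤ B j}) ∩ ⋂ i, {x : Fin m → ℝ | 0 ≤ x i} := by
      ext x; simp [Set.mem_iInter]
    rw [this]
    exact (isClosed_iInter fun j => isClosed_le (contMulVecCoord C j) continuous_const).inter
      (isClosed_iInter fun i => isClosed_le continuous_const (continuous_apply i))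
  have hcompP : IsCompact Pset := Metric.isCompact_of_isClosed_isBounded hclosedP hbdd
  -- the set of optimal points
  set O : Set (Fin m → ℝ) := Pset ∩ {x | μ ⬝ᵥ x = OPT} with hO
  have hcompO : IsCompact O :=
    hcompP.inter_right (isClosed_eq (contDot μ) continuous_const)
  have hneO : O.Nonempty := by
    obtain ⟨x, hx, hxeq⟩ := hOPT.1
    exact ⟨x, hx, hxeq.symm⟩
  -- every optimal point is strictly positive
  have hpos : ∀ x ∈ O, ∀ i, 0 < x i := by
    intro x hx i
    rcases hx with ⟨hxP, hxopt⟩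
    have hx0 : 0 ≤ x i := (hPset ▸ hxP).2 i
    rcases lt_or_eq_of_le hx0 with h | h
    · exact h
    · exfalso
      -- x lies in the restricted set; it has a max which is ≥ OPT, contradiction
      set S : Set (Fin m → ℝ) := Pset ∩ {y | y i = 0} with hS
      have hcompS : IsCompact S :=
        hcompP.inter_right (isClosed_eq (continuous_apply i) continuous_const)
      have hneS : S.Nonempty := ⟨x, hxP, h.symm⟩
      obtain ⟨z, hz, hzmax⟩ := hcompS.exists_isMaxOn hneS (contDot μ).continuousOn
      have hig : IsGreatest {r : ℝ | ∃ y ∈ Pset, y i = 0 ∧ r = μ ⬝ᵥ y} (μ ⬝ᵥ z) := by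
        constructor
        · exact ⟨z, hz.1, hz.2, rfl⟩
        · rintro r ⟨y, hyP, hyi, rfl⟩
          exact hzmax ⟨hyP, hyi⟩
      have hlt := hOPTi i _ hig
      have : OPT ≤ μ ⬝ᵥ z := hxopt ▸ hzmax ⟨hxP, h.symm⟩
      linarith
  -- maximize g over O
  obtain ⟨xh, hxhO, hxhmax⟩ := hcompO.exists_isMaxOn hneO
    (continuous_finset_sum Finset.univ fun j _ => contMulVecCoord C j).continuousOn
  have hxhP : xh ∈ Pset := hxhO.1
  have hxhopt : μ ⬝ᵥ xh = OPT := hxhO.2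
  have hxhle : ∀ j, C.mulVec xh j ≤ B j := (hPset ▸ hxhP).1
  have hxhpos : ∀ i, 0 < xh i := hpos xh hxhO
  -- claim: all constraints bind
  have hbind : ∀ j, C.mulVec xh j = B j := by
    by_contra hcon
    push_neg at hcon
    obtain ⟨j₀, hj₀⟩ := hcon
    have hj₀lt : C.mulVec xh j₀ < B j₀ := lt_of_le_of_ne (hxhle j₀) hj₀
    set v : Fin m → ℝ := fun j => if C.mulVec xh j = B j then 0 else 1 with hv
    have hv0 : ∀ j, 0 ≤ v j := by
      intro j; simp only [hv]; split <;> norm_num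
    have hv1 : ∀ j, v j ≤ 1 := by
      intro j; simp only [hv]; split <;> norm_num
    set d : Fin m → ℝ := C⁻¹.mulVec v with hd
    have hCd : C.mulVec d = v := by
      rw [hd, mulVec_mulVec, Matrix.mul_nonsing_inv C hinv, one_mulVec]
    -- choose step size t
    set t : ℝ := min
      (Finset.univ.inf' hfinne fun j => if C.mulVec xh j = B j then 1 else B j - C.mulVec xh j)
      (Finset.univ.inf' hfinne fun i => xh i / (|d i| + 1)) with ht
    have htpos : 0 < t := by
      rw [ht]
      apply lt_min
      · rw [Finset.lt_inf'_iff]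
        intro j _
        split
        · norm_num
        · rename_i hne2
          have := lt_of_le_of_ne (hxhle j) hne2
          linarith
      · rw [Finset.lt_inf'_iff]
        intro i _
        exact div_pos (hxhpos i) (by positivity)
    have htslack : ∀ j, C.mulVec xh j ≠ B j → t ≤ B j - C.mulVec xh j := by
      intro j hj
      have h1 : t ≤ Finset.univ.inf' hfinne
          fun j => if C.mulVec xh j = B j then 1 else B j - C.mulVec xh j := min_le_left _ _
      have h2 := Finset.inf'_le (fun j => if C.mulVec xh j = B j then 1
        else B j - C.mulVec xh j) (Finset.mem_univ j)
      rw [if_neg hj] at h2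
      linarith
    have htcoord : ∀ i, t * |d i| ≤ xh i := by
      intro i
      have h1 : t ≤ Finset.univ.inf' hfinne fun i => xh i / (|d i| + 1) := min_le_right _ _
      have h2 := Finset.inf'_le (fun i => xh i / (|d i| + 1)) (Finset.mem_univ i)
      have h3 : t ≤ xh i / (|d i| + 1) := le_trans h1 h2
      have h4 : t * (|d i| + 1) ≤ xh i := by
        rw [div_eq_mul_inv] at h3
        have hpos' : (0:ℝ) < |d i| + 1 := by positivity
        calc t * (|d i| + 1) ≤ (xh i * (|d i| + 1)⁻¹) * (|d i| + 1) := by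
              apply mul_le_mul_of_nonneg_right h3 hpos'.le
          _ = xh i := by field_simp
      nlinarith [abs_nonneg (d i), htpos]
    -- both perturbations are feasible
    have hfeas : ∀ s : ℝ, |s| ≤ t → xh + s • d ∈ Pset := by
      intro s hs
      rw [hPset]
      constructor
      · intro j
        have : C.mulVec (xh + s • d) j = C.mulVec xh j + s * v j := by
          rw [mulVec_add, mulVec_smul, hCd]
          simp [Pi.smul_apply, smul_eq_mul]
        rw [this]
        by_cases hj : C.mulVec xh j = B j
        · simp only [hv, if_pos hj]
          simp [hj]
        · have hsv : s * v j ≤ t := by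
            have : s ≤ |s| := le_abs_self s
            have hvj : v j = 1 := by simp only [hv, if_neg hj]
            rw [hvj]; linarith
          have := htslack j hj
          linarith
      · intro i
        have : |s * d i| ≤ t * |d i| := by
          rw [abs_mul]
          exact mul_le_mul_of_nonneg_right hs (abs_nonneg _)
        have h2 := htcoord i
        have h3 : -(s * d i) ≤ |s * d i| := neg_le_abs _
        simp only [Pi.add_apply, Pi.smul_apply, smul_eq_mul]
        linarith
    -- μ ⬝ d = 0
    have hdot : ∀ s : ℝ, μ ⬝ᵥ (xh + s • d) = OPT + s * (μ ⬝ᵥ d) := by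
      intro s
      rw [dotProduct_add, dotProduct_smul, hxhopt, smul_eq_mul]
    have hub : ∀ s : ℝ, |s| ≤ t → OPT + s * (μ ⬝ᵥ d) ≤ OPT := by
      intro s hs
      rw [← hdot s]
      exact hOPT.2 ⟨xh + s • d, hfeas s hs, rfl⟩
    have hμd : μ ⬝ᵥ d = 0 := by
      have h1 := hub t (by rw [abs_of_pos htpos])
      have h2 := hub (-t) (by rw [abs_neg, abs_of_pos htpos])
      nlinarith
    -- so xh + t • d is optimal with strictly larger g
    have hmem : xh + t • d ∈ O := by
      refine ⟨hfeas t (by rw [abs_of_pos htpos]), ?_⟩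
      show μ ⬝ᵥ (xh + t • d) = OPT
      rw [hdot t, hμd, mul_zero, add_zero]
    have hgle := hxhmax hmem
    simp only [Set.mem_setOf_eq] at hgle
    have hterm : ∀ j, C.mulVec (xh + t • d) j = C.mulVec xh j + t * v j := by
      intro j
      rw [mulVec_add, mulVec_smul, hCd]
      simp [Pi.smul_apply, smul_eq_mul]
    have hgval : ∑ j, C.mulVec (xh + t • d) j = (∑ j, C.mulVec xh j) + t * ∑ j, v j := by
      calc ∑ j, C.mulVec (xh + t • d) j = ∑ j, (C.mulVec xh j + t * v j) :=
            Finset.sum_congr rfl fun j _ => hterm j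
        _ = (∑ j, C.mulVec xh j) + t * ∑ j, v j := by
            rw [Finset.sum_add_distrib, ← Finset.mul_sum]
    have hsumv : (1:ℝ) ≤ ∑ j, v j := by
      have : v j₀ = 1 := by simp only [hv, if_neg hj₀]
      calc (1:ℝ) = v j₀ := this.symm
        _ ≤ ∑ j, v j := Finset.single_le_sum (fun j _ => hv0 j) (Finset.mem_univ j₀)
    have : (∑ j, C.mulVec xh j) + t * ∑ j, v j ≤ ∑ j, C.mulVec xh j := by
      rw [← hgval]; exact hgle
    nlinarith
  -- conclude: C⁻¹ B = xh
  have hCx : C.mulVec xh = B := funext hbind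
  have hxh_eq : C⁻¹.mulVec B = xh := by
    rw [← hCx, mulVec_mulVec, Matrix.nonsing_inv_mul C hinv, one_mulVec]
  rw [hxh_eq]
  exact ⟨fun j => (hxhpos j).le, hxhP, hxhopt⟩
end

section
/- Suppose the primal BwK LP has a unique, nondegenerate optimal solution x* (|I*| = |J*|), and define the sub-optimality gap δ = (1/T)·(OPT_LP − max{ max_{i ∈ I*} OPT_i, max_{j ∈ J'} OPT_j }), which is strictly positive. Suppose estimators μ^L, μ^U, C^L, C^U satisfy, for some ε with ε ≤ b and 3(2 + 1/b)ε < δ/2: μ − ε𝟙 ≤ μ^L ≤ μ ≤ μ^U ≤ μ + ε𝟙 and C − ε𝟙𝟙ᵀ ≤ C^L ≤ C ≤ C^U ≤ C + ε𝟙𝟙ᵀ entrywise, with the first rows of C^L, C, C^U all equal to b𝟙ᵀ. Let OPT^L = max (μ^L)ᵀx s.t. C^U x ≤ B, x ≥ 0; for i ∈ [m] let OPT_i^U = max (μ^U)ᵀx s.t. C^L x ≤ B, x_i = 0, x ≥ 0; and for j ∈ [d] let OPT_j^U = min Bᵀy − Tb s.t. (C^L)ᵀy ≥ μ^U + (C^U_{j,·})ᵀ,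 y ≥ 0. Then OPT^L > OPT_i^U for every optimal arm i ∈ I*, and OPT^L > OPT_j^U for every non-binding resource j ∈ J'; while OPT^L ≤ OPT_i^U for every i ∈ I' and OPT^L ≤ OPT_j^U for every j ∈ J*. -/
open Matrix Finset

private lemma dotp_le_left {n : ℕ} {a c x : Fin n → ℝ} (hx : ∀ i, 0 ≤ x i)
    (h : ∀ i, a i ≤ c i) : a ⬝ᵥ x ≤ c ⬝ᵥ x :=
  Finset.sum_le_sum fun i _ => mul_le_mul_of_nonneg_right (h i) (hx i)

private lemma dotp_le_right {n : ℕ} {y v w : Fin n → ℝ} (hy : ∀ i, 0 ≤ y i)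
    (h : ∀ i, v i ≤ w i) : y ⬝ᵥ v ≤ y ⬝ᵥ w :=
  Finset.sum_le_sum fun i _ => mul_le_mul_of_nonneg_left (h i) (hy i)

private lemma dotp_le_shift {n : ℕ} {a c x : Fin n → ℝ} {ε : ℝ} (hx : ∀ i, 0 ≤ x i)
    (h : ∀ i, a i ≤ c i + ε) : a ⬝ᵥ x ≤ c ⬝ᵥ x + ε * ∑ i, x i :=
  calc a ⬝ᵥ x ≤ (fun i => c i + ε) ⬝ᵥ x := dotp_le_left hx h
  _ = c ⬝ᵥ x + ε * ∑ i, x i := by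
      simp only [dotProduct, add_mul, Finset.sum_add_distrib, Finset.mul_sum]

private lemma dotp_ge_shift {n : ℕ} {a c x : Fin n → ℝ} {ε : ℝ} (hx : ∀ i, 0 ≤ x i)
    (h : ∀ i, c i - ε ≤ a i) : c ⬝ᵥ x - ε * ∑ i, x i ≤ a ⬝ᵥ x :=
  by
  have h1 := dotp_le_left hx h
  have h2 : (fun i => c i - ε) ⬝ᵥ x = c ⬝ᵥ x - ε * ∑ i, x i := by
    simp only [dotProduct, sub_mul, Finset.sum_sub_distrib, Finset.mul_sum]
  linarith

private lemma mulVec_const_row {d m : ℕ} (M : Matrix (Fin d) (Fin m) ℝ) (x : Fin m → ℝ)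
    (j : Fin d) (b : ℝ) (h : ∀ i, M j i = b) : M.mulVec x j = b * ∑ i, x i := by
  simp [Matrix.mulVec, dotProduct, h, Finset.mul_sum]

set_option maxHeartbeats 1000000 in
/-- Phase-I identification guarantee. Suppose the primal BwK LP has a unique
nondegenerate optimal solution `x*`, and let
`δ = (OPT_LP − max{max_{i ∈ I*} OPTᵢ, max_{j ∈ J'} OPTⱼ})/T > 0` (encoded below by
`IsLUB … (OPT_LP − δT)`). If the estimators are `ε`-accurate with `ε ≤ b` and
`3(2 + 1/b)ε < δ/2`, then `OPT^L > OPTᵢ^U` for every `i ∈ I*` and `OPT^L > OPTⱼ^U` for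
every `j ∈ J'`, while `OPT^L ≤ OPTᵢ^U` for every `i ∈ I'` and `OPT^L ≤ OPTⱼ^U` for every
`j ∈ J*`. -/
theorem stmt16 (m d : ℕ) (hm : 0 < m) (hd : 0 < d)
    (μ μL μU : Fin m → ℝ) (C CL CU : Matrix (Fin d) (Fin m) ℝ)
    (ε δ b T : ℝ) (hb : 0 < b) (hb1 : b ≤ 1) (hT : 0 < T)
    (hμ : ∀ i, μ i ∈ Set.Icc (0 : ℝ) 1)
    (hC : ∀ j i, C j i ∈ Set.Icc (0 : ℝ) 1)
    (hrow : ∀ i, C ⟨0, hd⟩ i = b)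
    (hrowL : ∀ i, CL ⟨0, hd⟩ i = b) (hrowU : ∀ i, CU ⟨0, hd⟩ i = b)
    (B : Fin d → ℝ) (hB : B = fun _ => T * b)
    (OPTLP : ℝ) (xstar : Fin m → ℝ)
    -- x* is optimal for the primal LP with value OPT_LP
    (hxfeas : (∀ i, 0 ≤ xstar i) ∧ (∀ j, C.mulVec xstar j ≤ B j))
    (hxval : μ ⬝ᵥ xstar = OPTLP)
    (hOPT : IsGreatest {r : ℝ | ∃ x : Fin m → ℝ,
      (∀ i, 0 ≤ x i) ∧ (∀ j, C.mulVec x j ≤ B j) ∧ r = μ ⬝ᵥ x} OPTLP)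
    -- x* is the unique optimal solution
    (huniq : ∀ x' : Fin m → ℝ, (∀ i, 0 ≤ x' i) → (∀ j, C.mulVec x' j ≤ B j) →
      μ ⬝ᵥ x' = OPTLP → x' = xstar)
    -- nondegeneracy: |I*| = |J*|
    (hnondeg : (univ.filter fun i => 0 < xstar i).card
        = (univ.filter fun j => C.mulVec xstar j = T * b).card)
    -- the values OPT_i  (primal LP with the extra constraint x_i = 0)
    (vI : Fin m → ℝ)
    (hvI : ∀ i, IsGreatest {r : ℝ | ∃ x : Fin m → ℝ,
      (∀ i', 0 ≤ x i') ∧ (∀ j, C.mulVec x j ≤ B j) ∧ x i = 0 ∧ r = μ ⬝ᵥ x} (vI i))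
    -- the values OPT_j  (min Bᵀy − Tb s.t. Cᵀy ≥ μ + C_{j,·}ᵀ, y ≥ 0)
    (vJ : Fin d → ℝ)
    (hvJ : ∀ j, IsLeast {r : ℝ | ∃ y : Fin d → ℝ,
      (∀ j', 0 ≤ y j') ∧ (∀ i, μ i + C j i ≤ Cᵀ.mulVec y i) ∧
      r = B ⬝ᵥ y - T * b} (vJ j))
    -- δ = (OPT_LP − max{max_{i ∈ I*} OPT_i, max_{j ∈ J'} OPT_j})/T, strictly positive
    (hδpos : 0 < δ)
    (hδ : IsLUB ({r : ℝ | ∃ i, 0 < xstar i ∧ r = vI i} ∪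
                 {r : ℝ | ∃ j, C.mulVec xstar j < T * b ∧ r = vJ j})
        (OPTLP - δ * T))
    -- accuracy of the estimators
    (hε0 : 0 ≤ ε) (hεb : ε ≤ b) (hεδ : 3 * (2 + 1 / b) * ε < δ / 2)
    (hμLU : ∀ i, μ i - ε ≤ μL i ∧ μL i ≤ μ i ∧ μ i ≤ μU i ∧ μU i ≤ μ i + ε)
    (hCLU : ∀ j i, C j i - ε ≤ CL j i ∧ CL j i ≤ C j i ∧
      C j i ≤ CU j i ∧ CU j i ≤ C j i + ε)
    -- the estimated LP values
    (OPTL : ℝ)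
    (hOPTL : IsGreatest {r : ℝ | ∃ x : Fin m → ℝ,
      (∀ i, 0 ≤ x i) ∧ (∀ j, CU.mulVec x j ≤ B j) ∧ r = μL ⬝ᵥ x} OPTL)
    (OPTiU : Fin m → ℝ)
    (hOPTiU : ∀ i, IsGreatest {r : ℝ | ∃ x : Fin m → ℝ,
      (∀ i', 0 ≤ x i') ∧ (∀ j, CL.mulVec x j ≤ B j) ∧ x i = 0 ∧ r = μU ⬝ᵥ x} (OPTiU i))
    (OPTjU : Fin d → ℝ)
    (hOPTjU : ∀ j, IsLeast {r : ℝ | ∃ y : Fin d → ℝ,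
      (∀ j', 0 ≤ y j') ∧ (∀ i, μU i + CU j i ≤ CLᵀ.mulVec y i) ∧
      r = B ⬝ᵥ y - T * b} (OPTjU j)) :
    (∀ i, 0 < xstar i → OPTiU i < OPTL) ∧
    (∀ j, C.mulVec xstar j < T * b → OPTjU j < OPTL) ∧
    (∀ i, xstar i = 0 → OPTL ≤ OPTiU i) ∧
    (∀ j, C.mulVec xstar j = T * b → OPTL ≤ OPTjU j) := by

  clear hm hεb
  set j0 : Fin d := ⟨0, hd⟩ with hj0
  have hbε : 0 < b + ε := by linarith
  have hbne : b ≠ 0 := ne_of_gt hb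
  have hib : 0 < 1 / b := by positivity
  have hsum : ∀ (M : Matrix (Fin d) (Fin m) ℝ) (x : Fin m → ℝ),
      (∀ i, M j0 i = b) → (∀ i, 0 ≤ x i) → M.mulVec x j0 ≤ B j0 → ∑ i, x i ≤ T := by
    intro M x hr hx0 hf
    rw [mulVec_const_row M x j0 b hr, hB] at hf
    simp only at hf
    have h1 : b * ∑ i, x i ≤ b * T := by linarith
    exact le_of_mul_le_mul_left h1 hb
  have hsumx : ∑ i, xstar i ≤ T := hsum C xstar hrow hxfeas.1 (hxfeas.2 j0)
  have hOPT0 : 0 ≤ OPTLP := by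
    refine hOPT.2 ⟨fun _ => 0, fun _ => le_refl 0, fun j => ?_, by simp⟩
    simp only [hB, Matrix.mulVec, dotProduct, mul_zero, Finset.sum_const_zero]
    positivity
  have hOPTT : OPTLP ≤ T := by
    rw [← hxval]
    calc μ ⬝ᵥ xstar ≤ (fun _ => (1:ℝ)) ⬝ᵥ xstar :=
          dotp_le_left hxfeas.1 (fun i => (hμ i).2)
    _ = ∑ i, xstar i := by simp [dotProduct]
    _ ≤ T := hsumx
  -- OPTL ≤ OPTLP
  have hOPTL_le : OPTL ≤ OPTLP := by
    obtain ⟨x, hx0, hxf, hxv⟩ := hOPTL.1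
    have hfeas : ∀ j, C.mulVec x j ≤ B j := fun j =>
      le_trans (dotp_le_left hx0 (fun i => (hCLU j i).2.2.1)) (hxf j)
    have h1 : μL ⬝ᵥ x ≤ μ ⬝ᵥ x := dotp_le_left hx0 (fun i => (hμLU i).2.1)
    have h2 : μ ⬝ᵥ x ≤ OPTLP := hOPT.2 ⟨x, hx0, hfeas, rfl⟩
    rw [hxv]; linarith
  -- lower bound on OPTL
  have hOPTL_ge : OPTLP - (1 + 1/b) * ε * T ≤ OPTL := by
    set s : ℝ := b / (b + ε) with hs
    have hs0 : 0 ≤ s := by positivity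
    have hfeas : ∀ j, CU.mulVec (s • xstar) j ≤ B j := by
      intro j
      rw [Matrix.mulVec_smul]
      have h1 : CU.mulVec xstar j ≤ C.mulVec xstar j + ε * ∑ i, xstar i :=
        dotp_le_shift hxfeas.1 (fun i => (hCLU j i).2.2.2)
      have h1' : C.mulVec xstar j ≤ T * b := by have := hxfeas.2 j; rwa [hB] at this
      have h2 : ε * ∑ i, xstar i ≤ ε * T := mul_le_mul_of_nonneg_left hsumx hε0
      have h3 : CU.mulVec xstar j ≤ T * b + ε * T := by linarith
      have h4 : s * CU.mulVec xstar j ≤ s * (T * b + ε * T) :=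
        mul_le_mul_of_nonneg_left h3 hs0
      have h5 : s * (T * b + ε * T) = T * b := by rw [hs]; field_simp
      rw [hB]
      calc (s • CU.mulVec xstar) j = s * CU.mulVec xstar j := rfl
      _ ≤ T * b := by linarith
    have hpos : ∀ i, 0 ≤ (s • xstar) i := fun i =>
      mul_nonneg hs0 (hxfeas.1 i)
    have hub : μL ⬝ᵥ (s • xstar) ≤ OPTL := hOPTL.2 ⟨s • xstar, hpos, hfeas, rfl⟩
    have hval : μL ⬝ᵥ (s • xstar) = s * (μL ⬝ᵥ xstar) := by
      rw [dotProduct_smul]; rfl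
    set v : ℝ := μL ⬝ᵥ xstar with hv
    have hv1 : OPTLP - ε * T ≤ v := by
      have h1 := dotp_ge_shift hxfeas.1 (fun i => (hμLU i).1)
      have h2 : ε * ∑ i, xstar i ≤ ε * T := mul_le_mul_of_nonneg_left hsumx hε0
      rw [hxval] at h1
      linarith
    have hv2 : v ≤ T := by
      have h1 : μL ⬝ᵥ xstar ≤ (fun _ => (1:ℝ)) ⬝ᵥ xstar :=
        dotp_le_left hxfeas.1 (fun i => le_trans (hμLU i).2.1 (hμ i).2)
      have h2 : (fun _ => (1:ℝ)) ⬝ᵥ xstar = ∑ i, xstar i := by simp [dotProduct]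
      rw [hv]; linarith
    have e1 : s * v = v - (ε/(b+ε)) * v := by rw [hs]; field_simp; ring
    have e2 : (ε/(b+ε)) * v ≤ (ε/(b+ε)) * T :=
      mul_le_mul_of_nonneg_left hv2 (by positivity)
    have e3 : ε/(b+ε) ≤ ε/b := by gcongr; linarith
    have e4 : (ε/(b+ε)) * T ≤ (ε/b) * T := mul_le_mul_of_nonneg_right e3 hT.le
    rw [hval] at hub
    have : (1 + 1/b) * ε * T = ε * T + (ε/b) * T := by ring
    linarith
  refine ⟨?_, ?_, ?_, ?_⟩
  · -- (1) i ∈ I* : OPTiU i < OPTL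
    intro i hi
    have hvIle : vI i ≤ OPTLP - δ * T := hδ.1 (Set.mem_union_left _ ⟨i, hi, rfl⟩)
    obtain ⟨x, hx0, hxf, hxi, hxv⟩ := (hOPTiU i).1
    have hsx : ∑ i', x i' ≤ T := hsum CL x hrowL hx0 (hxf j0)
    set s : ℝ := b / (b + ε) with hs
    have hs0 : 0 ≤ s := by positivity
    have hfeas : ∀ j, C.mulVec (s • x) j ≤ B j := by
      intro j
      rw [Matrix.mulVec_smul]
      have h1 : C.mulVec x j ≤ CL.mulVec x j + ε * ∑ i', x i' :=
        dotp_le_shift hx0 (fun i' => by linarith [(hCLU j i').1])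
      have h1' : CL.mulVec x j ≤ T * b := by have := hxf j; rwa [hB] at this
      have h2 : ε * ∑ i', x i' ≤ ε * T := mul_le_mul_of_nonneg_left hsx hε0
      have h3 : C.mulVec x j ≤ T * b + ε * T := by linarith
      have h4 : s * C.mulVec x j ≤ s * (T * b + ε * T) :=
        mul_le_mul_of_nonneg_left h3 hs0
      have h5 : s * (T * b + ε * T) = T * b := by rw [hs]; field_simp
      rw [hB]
      calc (s • C.mulVec x) j = s * C.mulVec x j := rfl
      _ ≤ T * b := by linarith
    have hpos : ∀ i', 0 ≤ (s • x) i' := fun i' => mul_nonneg hs0 (hx0 i')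
    have hzi : (s • x) i = 0 := by
      show s * x i = 0
      rw [hxi, mul_zero]
    have hub : μ ⬝ᵥ (s • x) ≤ vI i := (hvI i).2 ⟨s • x, hpos, hfeas, hzi, rfl⟩
    have hval : μ ⬝ᵥ (s • x) = s * (μ ⬝ᵥ x) := by rw [dotProduct_smul]; rfl
    set w : ℝ := μ ⬝ᵥ x with hw
    have hw2 : w ≤ T := by
      have h1 : μ ⬝ᵥ x ≤ (fun _ => (1:ℝ)) ⬝ᵥ x :=
        dotp_le_left hx0 (fun i' => (hμ i').2)
      have h2 : (fun _ => (1:ℝ)) ⬝ᵥ x = ∑ i', x i' := by simp [dotProduct]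
      rw [hw]; linarith
    have hUB : OPTiU i ≤ w + ε * T := by
      have h1 : μU ⬝ᵥ x ≤ μ ⬝ᵥ x + ε * ∑ i', x i' :=
        dotp_le_shift hx0 (fun i' => (hμLU i').2.2.2)
      have h2 : ε * ∑ i', x i' ≤ ε * T := mul_le_mul_of_nonneg_left hsx hε0
      rw [hxv]; linarith
    have e1 : s * w = w - (ε/(b+ε)) * w := by rw [hs]; field_simp; ring
    have e2 : (ε/(b+ε)) * w ≤ (ε/(b+ε)) * T :=
      mul_le_mul_of_nonneg_left hw2 (by positivity)
    have e3 : ε/(b+ε) ≤ ε/b := by gcongr; linarith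
    have e4 : (ε/(b+ε)) * T ≤ (ε/b) * T := mul_le_mul_of_nonneg_right e3 hT.le
    rw [hval] at hub
    -- OPTiU i ≤ vI i + (1+1/b) ε T
    have hfinal : OPTiU i ≤ OPTLP - δ * T + (1 + 1/b) * ε * T := by
      have : (1 + 1/b) * ε * T = ε * T + (ε/b) * T := by ring
      linarith
    have key : (2 + 2 * (1/b)) * ε < δ := by
      linarith [mul_nonneg hε0 hib.le]
    have key2 : (2 + 2 * (1/b)) * ε * T < δ * T := by
      exact mul_lt_mul_of_pos_right key hT
    linarith
  · -- (2) j ∈ J' : OPTjU j < OPTL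
    intro j hj
    have hvJle : vJ j ≤ OPTLP - δ * T := hδ.1 (Set.mem_union_right _ ⟨j, hj, rfl⟩)
    obtain ⟨y, hy0, hyf, hyv⟩ := (hvJ j).1
    set Sy : ℝ := ∑ j', y j' with hSydef
    have hSy0 : 0 ≤ Sy := Finset.sum_nonneg (fun j' _ => hy0 j')
    have hBy : B ⬝ᵥ y = T * b * Sy := by
      rw [hB, hSydef]
      simp [dotProduct, Finset.mul_sum]
    have hδT : 0 < δ * T := mul_pos hδpos hT
    have hSyT : Sy ≤ 1/b + 1 := by
      have h1 : T * b * Sy ≤ T * b * (1/b + 1) := by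
        have expand : T * b * (1/b + 1) = T + T * b := by field_simp
        rw [expand]
        have : T * b * Sy = vJ j + T * b := by rw [hyv, hBy]; ring
        linarith
      exact le_of_mul_le_mul_left h1 (mul_pos hT hb)
    set α : ℝ := (2 * ε + ε * Sy) / b with hα
    have hα0 : 0 ≤ α := div_nonneg (add_nonneg (by linarith) (mul_nonneg hε0 hSy0)) hb.le
    have hbα : b * α = 2 * ε + ε * Sy := by rw [hα]; field_simp
    set y' : Fin d → ℝ := fun j' => y j' + if j' = j0 then α else 0 with hy'
    have hy'0 : ∀ j', 0 ≤ y' j' := by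
      intro j'
      have := hy0 j'
      rw [hy']
      dsimp only
      split <;> linarith
    have htrans : ∀ i, CLᵀ.mulVec y' i = CLᵀ.mulVec y i + b * α := by
      intro i
      rw [hy']
      simp only [Matrix.mulVec, dotProduct, Matrix.transpose_apply, mul_add,
        Finset.sum_add_distrib, mul_ite, mul_zero, Finset.sum_ite_eq',
        Finset.mem_univ, if_true]
      rw [hj0, hrowL i]
    have hy'feas : ∀ i, μU i + CU j i ≤ CLᵀ.mulVec y' i := by
      intro i
      have h1 : Cᵀ.mulVec y i - ε * ∑ j', y j' ≤ CLᵀ.mulVec y i :=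
        dotp_ge_shift hy0 (fun j' => (hCLU j' i).1)
      have h2 := hyf i
      have h3 : μU i ≤ μ i + ε := (hμLU i).2.2.2
      have h4 : CU j i ≤ C j i + ε := (hCLU j i).2.2.2
      rw [htrans i, hbα]
      rw [← hSydef] at h1
      linarith
    have hBy' : B ⬝ᵥ y' = B ⬝ᵥ y + T * b * α := by
      rw [hy', hB]
      simp [dotProduct, mul_add, Finset.sum_add_distrib, mul_ite, mul_zero,
        Finset.sum_ite_eq', Finset.mem_univ, if_true]
    have hle : OPTjU j ≤ B ⬝ᵥ y' - T * b := (hOPTjU j).2 ⟨y', hy'0, hy'feas, rfl⟩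
    have hTbα : T * b * α = T * (2 * ε + ε * Sy) := by rw [hα]; field_simp
    have hεSy : ε * Sy ≤ ε * (1/b + 1) := mul_le_mul_of_nonneg_left hSyT hε0
    have hmono : T * (2 * ε + ε * Sy) ≤ T * (2 * ε + ε * (1/b + 1)) :=
      mul_le_mul_of_nonneg_left (by linarith) hT.le
    have hfinal : OPTjU j ≤ OPTLP - δ * T + T * (2 * ε + ε * (1/b + 1)) := by
      have h1 : OPTjU j ≤ vJ j + T * b * α := by
        rw [hyv]
        have h2 := hle
        rw [hBy'] at h2
        linarith
      linarith [hTbα, h1, hmono]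
    have key : (4 + 2 * (1/b)) * ε < δ := by
      linarith [mul_nonneg hε0 hib.le]
    have key2 : (4 + 2 * (1/b)) * ε * T < δ * T := mul_lt_mul_of_pos_right key hT
    have expand1 : T * (2 * ε + ε * (1/b + 1)) = 3 * ε * T + (1/b) * ε * T := by ring
    have expand2 : (1 + 1/b) * ε * T = ε * T + (1/b) * ε * T := by ring
    have expand3 : (4 + 2 * (1/b)) * ε * T = 4 * ε * T + 2 * ((1/b) * ε * T) := by ring
    linarith
  · -- (3) i ∈ I' : OPTL ≤ OPTiU i
    intro i hi
    have hfeas : ∀ j, CL.mulVec xstar j ≤ B j := fun j =>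
      le_trans (dotp_le_left hxfeas.1 (fun i' => (hCLU j i').2.1)) (hxfeas.2 j)
    have hub : μU ⬝ᵥ xstar ≤ OPTiU i := (hOPTiU i).2 ⟨xstar, hxfeas.1, hfeas, hi, rfl⟩
    have h1 : μ ⬝ᵥ xstar ≤ μU ⬝ᵥ xstar :=
      dotp_le_left hxfeas.1 (fun i' => (hμLU i').2.2.1)
    rw [hxval] at h1
    linarith
  · -- (4) j ∈ J* : OPTL ≤ OPTjU j
    intro j hj
    obtain ⟨y, hy0, hyf, hyv⟩ := (hOPTjU j).1
    have h1 : (fun i => μ i + C j i) ⬝ᵥ xstar ≤ CLᵀ.mulVec y ⬝ᵥ xstar :=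
      dotp_le_left hxfeas.1 (fun i =>
        le_trans (by linarith [(hμLU i).2.2.1, (hCLU j i).2.2.1]) (hyf i))
    have hg : (fun i => μ i + C j i) ⬝ᵥ xstar = OPTLP + T * b := by
      have h2 : (fun i => μ i + C j i) ⬝ᵥ xstar = μ ⬝ᵥ xstar + C.mulVec xstar j := by
        simp only [dotProduct, Matrix.mulVec, add_mul, Finset.sum_add_distrib]
      rw [h2, hxval, hj]
    have h3 : CLᵀ.mulVec y ⬝ᵥ xstar = y ⬝ᵥ CL.mulVec xstar := by
      rw [Matrix.dotProduct_mulVec, Matrix.mulVec_transpose]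
    have h4 : y ⬝ᵥ CL.mulVec xstar ≤ y ⬝ᵥ C.mulVec xstar :=
      dotp_le_right hy0 (fun j' => dotp_le_left hxfeas.1 (fun i => (hCLU j' i).2.1))
    have h5 : y ⬝ᵥ C.mulVec xstar ≤ y ⬝ᵥ B := dotp_le_right hy0 hxfeas.2
    have h6 : y ⬝ᵥ B = B ⬝ᵥ y := dotProduct_comm y B
    rw [hyv]
    linarith
end
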